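/- For all non-negative real numbers t and t', every natural number c, and every ε ∈ [0,1]: if t − t' ≥ c, then [t]_ε − [t']_ε ≥ c. -/

import Mathlib

/-- The ε-digitization of a real number `t`: `⌊t⌋` if `t ≤ ⌊t⌋ + ε`, and `⌈t⌉` otherwise. -/
noncomputable def digitize (ε t : ℝ) : ℤ :=
  if t ≤ ⌊t⌋ + ε then ⌊t⌋ else ⌈t⌉

theorem digitize_sub_ge (t t' : ℝ) (ht : 0 ≤ t) (ht' : 0 ≤ t') (c : ℕ)
    (ε : ℝ) (hε : ε ∈ Set.Icc (0 : ℝ) 1)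
    (h : t - t' ≥ (c : ℝ)) :
    digitize ε t - digitize ε t' ≥ (c : ℤ) := by
  have htt : t' + (c : ℝ) ≤ t := by linarith
  have hfloor : ⌊t'⌋ + (c : ℤ) ≤ ⌊t⌋ := by
    have := Int.floor_le_floor htt
    rwa [Int.floor_add_natCast] at this
  have hceil : ⌈t'⌉ + (c : ℤ) ≤ ⌈t⌉ := by
    have := Int.ceil_le_ceil htt
    rwa [Int.ceil_add_natCast] at this
  unfold digitize
  split_ifs with h1 h2 h2
  · omega
  · -- t ≤ ⌊t⌋ + ε, t' > ⌊t'⌋ + ε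
    push_neg at h2
    have hlt : (⌊t'⌋ : ℝ) + (c : ℤ) < (⌊t⌋ : ℝ) := by
      push_cast
      linarith
    have : ⌊t'⌋ + (c : ℤ) < ⌊t⌋ := by exact_mod_cast hlt
    have := Int.ceil_le_floor_add_one t'
    omega
  · have := Int.floor_le_ceil t
    omega
  · omega
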